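/- The torus T_{R,r} embedded in the Heisenberg group has no characteristic points: at every point q of T_{R,r}, the tangent plane T_q T_{R,r} is different from the Heisenberg plane D_q. -/

import Mathlib

/-- The torus `T_{R,r}` embedded in the Heisenberg group has no characteristic points: at
every point the tangent plane of the torus differs from the Heisenberg plane. -/
theorem torus_no_characteristic_points (R r : ℝ) (hr : 0 < r) (hrR : r < R) :
    let F₁ : ℝ × ℝ × ℝ → ℝ × ℝ × ℝ := fun q => (1, 0, q.2.1 / 2)
    let F₂ : ℝ × ℝ × ℝ → ℝ × ℝ × ℝ := fun q => (0, 1, -q.1 / 2)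
    let Φ : ℝ × ℝ → ℝ × ℝ × ℝ := fun θ =>
      ((R + r * Real.cos θ.1) * Real.cos θ.2, (R + r * Real.cos θ.1) * Real.sin θ.2,
        r * Real.sin θ.1)
    ∀ θ : ℝ × ℝ,
      Submodule.span ℝ {fderiv ℝ Φ θ (1, 0), fderiv ℝ Φ θ (0, 1)} ≠
        Submodule.span ℝ {F₁ (Φ θ), F₂ (Φ θ)} := by
  intro F₁ F₂ Φ θ h
  set ρ : ℝ := R + r * Real.cos θ.1 with hρdef
  have hρ : 0 < ρ := by
    have h1 : -1 ≤ Real.cos θ.1 := Real.neg_one_le_cos θ.1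
    nlinarith
  -- Φ is differentiable at θ
  have hΦ : DifferentiableAt ℝ Φ θ := by
    simp only [Φ]
    fun_prop
  -- the curve t ↦ Φ (θ.1, t)
  have hg : HasDerivAt (fun t : ℝ => (θ.1, t)) ((0 : ℝ), (1 : ℝ)) θ.2 :=
    (hasDerivAt_const θ.2 θ.1).prodMk (hasDerivAt_id θ.2)
  have hcomp : HasDerivAt (fun t : ℝ => Φ (θ.1, t)) (fderiv ℝ Φ θ (0, 1)) θ.2 := by
    have := (hΦ.hasFDerivAt.comp_hasDerivAt θ.2 (by simpa using hg))
    simpa [Function.comp_def] using this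
  -- direct computation of the same derivative
  have hcomp' : HasDerivAt (fun t : ℝ => Φ (θ.1, t))
      ((-(ρ * Real.sin θ.2), ρ * Real.cos θ.2, (0 : ℝ))) θ.2 := by
    have h1 : HasDerivAt (fun t : ℝ => ρ * Real.cos t) (ρ * (-Real.sin θ.2)) θ.2 :=
      (Real.hasDerivAt_cos θ.2).const_mul ρ
    have h2 : HasDerivAt (fun t : ℝ => ρ * Real.sin t) (ρ * Real.cos θ.2) θ.2 :=
      (Real.hasDerivAt_sin θ.2).const_mul ρ
    have h3 : HasDerivAt (fun _ : ℝ => r * Real.sin θ.1) (0 : ℝ) θ.2 :=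
      hasDerivAt_const θ.2 _
    have := h1.prodMk (h2.prodMk h3)
    simp only [Φ]
    convert this using 2 <;> ring
  have hval : fderiv ℝ Φ θ (0, 1) = (-(ρ * Real.sin θ.2), ρ * Real.cos θ.2, (0 : ℝ)) :=
    hcomp.unique hcomp'
  -- membership in the right-hand span
  have hmem : fderiv ℝ Φ θ (0, 1) ∈ Submodule.span ℝ {F₁ (Φ θ), F₂ (Φ θ)} := by
    rw [← h]
    exact Submodule.subset_span (Set.mem_insert_of_mem _ rfl)
  rw [Submodule.mem_span_pair] at hmem
  obtain ⟨a, b, hab⟩ := hmem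
  rw [hval] at hab
  simp only [F₁, F₂, Φ, Prod.smul_mk, smul_eq_mul, Prod.mk_add_mk, Prod.mk.injEq] at hab
  obtain ⟨ha, hb, hc⟩ := hab
  have hs : Real.sin θ.2 ^ 2 + Real.cos θ.2 ^ 2 = 1 := Real.sin_sq_add_cos_sq θ.2
  rw [← hρdef] at hc
  have ha' : a = -(ρ * Real.sin θ.2) := by linarith
  have hb' : b = ρ * Real.cos θ.2 := by linarith
  subst ha' hb'
  have h2 : ρ ^ 2 * (Real.sin θ.2 ^ 2 + Real.cos θ.2 ^ 2) = 0 := by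
    linear_combination (-2 : ℝ) * hc
  rw [hs, mul_one] at h2
  exact absurd h2 (by positivity)
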